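/- Let Z be a coherent space, Q a quantum space of Z with coherent states |z⟩ satisfying ⟨z|z'⟩ = K(z,z'), and A: Z → Z a map with adjoint A*: Z → Z satisfying K(z, A z') = K(A* z, z') for all z, z'. Then there is a unique linear map Γ(A) on Q with Γ(A)|z⟩ = |A z⟩ for all z ∈ Z. -/

import Mathlib

open Finsupp

/-- Quantization of a coherent map: if `Q` is a quantum space of the coherent space
`(Z,K)` with coherent states `coh z` satisfying `⟪coh z, coh z'⟫ = K z z'`, and
`A : Z → Z` has an adjoint `A*` with `K z (A z') = K (A* z) z'`, then there is a
unique linear map `Γ` on `Q` with `Γ (coh z) = coh (A z)` for all `z`. -/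
theorem quantization_exists_unique {Z : Type*} [Nonempty Z] (K : Z → Z → ℂ)
    {Q : Type*} [NormedAddCommGroup Q] [InnerProductSpace ℂ Q]
    (coh : Z → Q) (hspan : Submodule.span ℂ (Set.range coh) = ⊤)
    (hK : ∀ z z' : Z, (inner ℂ (coh z) (coh z') : ℂ) = K z z')
    (A Astar : Z → Z) (hadj : ∀ z z' : Z, K z (A z') = K (Astar z) z') :
    ∃! Γ : Q →ₗ[ℂ] Q, ∀ z : Z, Γ (coh z) = coh (A z) := by
  set T : (Z →₀ ℂ) →ₗ[ℂ] Q := Finsupp.linearCombination ℂ coh with hT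
  set T' : (Z →₀ ℂ) →ₗ[ℂ] Q := Finsupp.linearCombination ℂ (fun z => coh (A z)) with hT'
  have hsurj : Function.Surjective T := by
    rw [← LinearMap.range_eq_top, hT, Finsupp.range_linearCombination, hspan]
  -- key: inner (coh w) (T' x) = inner (coh (Astar w)) (T x)
  have key : ∀ (w : Z) (x : Z →₀ ℂ),
      (inner ℂ (coh w) (T' x) : ℂ) = inner ℂ (coh (Astar w)) (T x) := by
    intro w x
    rw [hT, hT', Finsupp.linearCombination_apply, Finsupp.linearCombination_apply,
      Finsupp.sum, Finsupp.sum, inner_sum, inner_sum]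
    refine Finset.sum_congr rfl fun z _ => ?_
    rw [inner_smul_right, inner_smul_right, hK, hK, hadj]
  have hker : ∀ x : Z →₀ ℂ, T x = 0 → T' x = 0 := by
    intro x hx
    have horth : ∀ u : Q, (inner ℂ u (T' x) : ℂ) = 0 := by
      intro u
      have hu : u ∈ Submodule.span ℂ (Set.range coh) := by rw [hspan]; trivial
      induction hu using Submodule.span_induction with
      | mem u hu =>
        obtain ⟨w, rfl⟩ := hu
        rw [key, hx, inner_zero_right]
      | zero => simp
      | add u v _ _ hu hv => rw [inner_add_left, hu, hv, add_zero]
      | smul c u _ hu => rw [inner_smul_left, hu, mul_zero]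
    have := horth (T' x)
    rwa [inner_self_eq_zero] at this
  -- build Γ
  let e := LinearMap.quotKerEquivOfSurjective T hsurj
  have hle : LinearMap.ker T ≤ LinearMap.ker T' := fun x hx => hker x hx
  let Γ : Q →ₗ[ℂ] Q := (Submodule.liftQ (LinearMap.ker T) T' hle).comp
    (e.symm : Q →ₗ[ℂ] (Z →₀ ℂ) ⧸ LinearMap.ker T)
  have hΓ : ∀ x : Z →₀ ℂ, Γ (T x) = T' x := by
    intro x
    have : e.symm (T x) = Submodule.Quotient.mk x := by
      rw [LinearEquiv.symm_apply_eq]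
      rfl
    simp only [Γ, LinearMap.comp_apply, LinearEquiv.coe_coe, this, Submodule.liftQ_apply]
  refine ⟨Γ, fun z => ?_, fun Γ' hΓ' => ?_⟩
  · have := hΓ (Finsupp.single z 1)
    simpa [hT, hT'] using this
  · -- uniqueness
    apply LinearMap.ext
    intro u
    have hu : u ∈ Submodule.span ℂ (Set.range coh) := by rw [hspan]; trivial
    induction hu using Submodule.span_induction with
    | mem u hu =>
      obtain ⟨w, rfl⟩ := hu
      rw [hΓ' w]
      have := hΓ (Finsupp.single w 1)
      simpa [hT, hT'] using this.symm
    | zero => simp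
    | add u v _ _ hu hv => rw [map_add, map_add, hu, hv]
    | smul c u _ hu => rw [map_smul, map_smul, hu]
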